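/- Let 0 < α < 1. Applying the complementary kernel p_n (defined by p_0 = 1, p_n = Σ_{j=1}^{n}(a_{j−1}−a_j)p_{n−j}, a_i = (i+1)^{1−α} − i^{1−α}) to the L1 weights telescopes exactly: for any real sequence y_0, …, y_n, Σ_{j=1}^{n} p_{n−j} Σ_{k=1}^{j} a_{j−k}(y_k − y_{k−1}) = y_n − y_0. -/

import Mathlib

noncomputable def L1a (α : ℝ) (i : ℕ) : ℝ := ((i : ℝ) + 1) ^ (1 - α) - (i : ℝ) ^ (1 - α)

noncomputable def L1p (α : ℝ) : ℕ → ℝ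
  | 0 => 1
  | n + 1 => ∑ j : Fin (n + 1), (L1a α j - L1a α (j + 1)) * L1p α (n - j)

lemma L1a_zero (α : ℝ) (hα1 : α < 1) : L1a α 0 = 1 := by
  simp [L1a, Real.zero_rpow (by linarith : (1:ℝ) - α ≠ 0)]

lemma L1_key (α : ℝ) (hα1 : α < 1) :
    ∀ m : ℕ, ∑ i ∈ Finset.range (m + 1), L1a α i * L1p α (m - i) = 1 := by
  intro m
  induction m with
  | zero => simp [L1p, L1a_zero α hα1]
  | succ m ih =>
    have hp : L1p α (m + 1)
        = ∑ j ∈ Finset.range (m + 1), L1a α j * L1p α (m - j)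
          - ∑ j ∈ Finset.range (m + 1), L1a α (j + 1) * L1p α (m - j) := by
      rw [L1p]
      rw [Fin.sum_univ_eq_sum_range (fun j => (L1a α j - L1a α (j + 1)) * L1p α (m - j))]
      rw [← Finset.sum_sub_distrib]
      congr 1 with j
      ring
    have hshift : ∑ j ∈ Finset.range (m + 1), L1a α (j + 1) * L1p α (m - j)
        = ∑ i ∈ Finset.Ico 1 (m + 2), L1a α i * L1p α (m + 1 - i) := by
      rw [Finset.sum_Ico_eq_sum_range]
      show _ = ∑ i ∈ Finset.range (m + 1), L1a α (1 + i) * L1p α (m + 1 - (1 + i))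
      apply Finset.sum_congr rfl
      intro j hj
      congr 2
      · omega
      · omega
    have hsplit : ∑ i ∈ Finset.range (m + 2), L1a α i * L1p α (m + 1 - i)
        = L1a α 0 * L1p α (m + 1)
          + ∑ i ∈ Finset.Ico 1 (m + 2), L1a α i * L1p α (m + 1 - i) := by
      rw [Finset.range_eq_Ico,
        ← Finset.sum_Ico_consecutive _ (Nat.zero_le 1) (by omega : 1 ≤ m + 2)]
      simp
    calc ∑ i ∈ Finset.range (m + 1 + 1), L1a α i * L1p α (m + 1 - i)
        = L1a α 0 * L1p α (m + 1)
          + ∑ i ∈ Finset.Ico 1 (m + 2), L1a α i * L1p α (m + 1 - i) := hsplit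
      _ = 1 := by
          rw [L1a_zero α hα1, one_mul, hp, ← hshift]
          rw [ih]; ring

theorem L1p_telescoping (α : ℝ) (hα0 : 0 < α) (hα1 : α < 1) (y : ℕ → ℝ) (n : ℕ) :
    ∑ j ∈ Finset.Icc 1 n, L1p α (n - j) *
        ∑ k ∈ Finset.Icc 1 j, L1a α (j - k) * (y k - y (k - 1))
      = y n - y 0 := by
  have hswap :
      ∑ j ∈ Finset.Icc 1 n, ∑ k ∈ Finset.Icc 1 j,
          L1p α (n - j) * (L1a α (j - k) * (y k - y (k - 1)))
        = ∑ k ∈ Finset.Icc 1 n, ∑ j ∈ Finset.Icc k n,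
          L1p α (n - j) * (L1a α (j - k) * (y k - y (k - 1))) := by
    rw [Finset.sum_sigma', Finset.sum_sigma']
    apply Finset.sum_nbij' (fun p => ⟨p.2, p.1⟩) (fun p => ⟨p.2, p.1⟩)
    all_goals
      simp only [Finset.mem_sigma, Finset.mem_Icc]
      intros
      first | omega | rfl | trivial
  simp only [Finset.mul_sum] at *
  rw [hswap]
  have hinner : ∀ k ∈ Finset.Icc 1 n,
      ∑ j ∈ Finset.Icc k n, L1p α (n - j) * (L1a α (j - k) * (y k - y (k - 1)))
        = y k - y (k - 1) := by
    intro k hk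
    simp only [Finset.mem_Icc] at hk
    have : ∑ j ∈ Finset.Icc k n, L1p α (n - j) * L1a α (j - k) = 1 := by
      rw [← Finset.Ico_add_one_right_eq_Icc, Finset.sum_Ico_eq_sum_range]
      have h1 : n + 1 - k = (n - k) + 1 := by omega
      rw [h1]
      have := L1_key α hα1 (n - k)
      rw [← this]
      apply Finset.sum_congr rfl
      intro i hi
      simp only [Finset.mem_range] at hi
      have h2 : n - (k + i) = n - k - i := by omega
      have h3 : k + i - k = i := by omega
      rw [h2, h3]; ring
    calc ∑ j ∈ Finset.Icc k n, L1p α (n - j) * (L1a α (j - k) * (y k - y (k - 1)))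
        = (∑ j ∈ Finset.Icc k n, L1p α (n - j) * L1a α (j - k)) * (y k - y (k - 1)) := by
          rw [Finset.sum_mul]; apply Finset.sum_congr rfl; intros; ring
      _ = y k - y (k - 1) := by rw [this, one_mul]
  rw [Finset.sum_congr rfl hinner]
  rw [← Finset.Ico_add_one_right_eq_Icc, Finset.sum_Ico_eq_sum_range]
  show (∑ i ∈ Finset.range n, (y (1 + i) - y (1 + i - 1))) = _
  have : ∀ i ∈ Finset.range n, y (1 + i) - y (1 + i - 1) = y (i + 1) - y i := by
    intro i _
    congr 2 <;> omega
  rw [Finset.sum_congr rfl this, Finset.sum_range_sub]
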